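/- Let N > 0 and f : ZMod N → ℂ with all values of f rational. Then for any k, u ∈ ℤ with u coprime to the additive order M of k in ZMod N, we have f̂(u·k) = σ_u(f̂(k)), where σ_u is the field automorphism of ℚ(ζ_M) sending ζ_M to ζ_M^u. In particular, f̂(k) lies in the cyclotomic field ℚ(ζ_M). -/

import Mathlib

open Finset Real Complex

noncomputable def dft (N : ℕ) [NeZero N] (f : ZMod N → ℂ) (k : ZMod N) : ℂ :=
  ∑ x : ZMod N, f x * Complex.exp (-2 * π * Complex.I * (k.val : ℂ) * (x.val : ℂ) / (N : ℂ))

theorem galois_action_on_dft (N : ℕ) [NeZero N] (f : ZMod N → ℂ)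
    (hf : ∀ x, ∃ q : ℚ, f x = (q : ℂ)) (k : ZMod N) (u : ℤ)
    (hu : IsCoprime u ((addOrderOf k : ℕ) : ℤ)) :
    ∃ hmem : dft N f k ∈
        IntermediateField.adjoin ℚ
          {Complex.exp (2 * π * Complex.I / ((addOrderOf k : ℕ) : ℂ))},
      ∀ σ : (IntermediateField.adjoin ℚ
          {Complex.exp (2 * π * Complex.I / ((addOrderOf k : ℕ) : ℂ))}) ≃ₐ[ℚ]
          (IntermediateField.adjoin ℚ
          {Complex.exp (2 * π * Complex.I / ((addOrderOf k : ℕ) : ℂ))}),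
        ((σ ⟨Complex.exp (2 * π * Complex.I / ((addOrderOf k : ℕ) : ℂ)),
            IntermediateField.subset_adjoin ℚ _ (Set.mem_singleton _)⟩ : ℂ) =
          Complex.exp (2 * π * Complex.I / ((addOrderOf k : ℕ) : ℂ)) ^ u) →
        dft N f (u • k) = ((σ ⟨dft N f k, hmem⟩ : ℂ)) := by
  classical
  set M := addOrderOf k with hMdef
  have hM : 0 < M := addOrderOf_pos k
  have hM0 : (M : ℂ) ≠ 0 := Nat.cast_ne_zero.mpr hM.ne'
  have hN0 : (N : ℂ) ≠ 0 := Nat.cast_ne_zero.mpr (NeZero.ne N)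
  set ζ : ℂ := Complex.exp (2 * π * Complex.I / (M : ℂ)) with hζ
  have hpow : ∀ t : ℤ, Complex.exp (2 * π * Complex.I * t / (M : ℂ)) = ζ ^ t := by
    intro t
    rw [hζ, ← Complex.exp_int_mul]; ring_nf
  have hzero : ((M * k.val : ℕ) : ZMod N) = 0 := by
    push_cast
    rw [ZMod.natCast_val, ZMod.cast_id, ← nsmul_eq_mul]
    exact addOrderOf_nsmul_eq_zero k
  obtain ⟨a, ha⟩ : N ∣ M * k.val := (ZMod.natCast_eq_zero_iff _ _).mp hzero
  have hac : (M : ℂ) * ((k.val : ℕ) : ℂ) = (N : ℂ) * a := by exact_mod_cast congrArg (Nat.cast : ℕ → ℂ) ha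
  choose q hq using hf
  set K := IntermediateField.adjoin ℚ
      {Complex.exp (2 * π * Complex.I / ((M : ℕ) : ℂ))} with hK
  have hζmem : ζ ∈ K := IntermediateField.subset_adjoin ℚ _ (Set.mem_singleton _)
  set ζK : K := ⟨ζ, hζmem⟩ with hζK
  set D : K := ∑ x : ZMod N, algebraMap ℚ K (q x) * ζK ^ (-(a * x.val : ℤ)) with hD
  have hcoe : ∀ (z : K), (z : ℂ) = K.val z := fun z => rfl
  have hDcoe : (D : ℂ) = ∑ x : ZMod N, (q x : ℂ) * ζ ^ (-(a * x.val : ℤ)) := by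
    rw [hcoe, hD, map_sum]
    refine Finset.sum_congr rfl fun x _ => ?_
    rw [map_mul, map_zpow₀, (rfl : K.val (algebraMap ℚ K (q x)) = algebraMap ℚ ℂ (q x))]
    norm_num
    exact Or.inl rfl
  have hdft : dft N f k = (D : ℂ) := by
    rw [hDcoe, dft]
    refine Finset.sum_congr rfl fun x _ => ?_
    rw [hq x]
    congr 1
    have e1 : (-2 * (π:ℂ) * Complex.I * ((k.val : ℕ) : ℂ) * ((x.val : ℕ) : ℂ) / (N : ℂ))
        = 2 * (π:ℂ) * Complex.I * (((-(a * x.val : ℤ)) : ℤ) : ℂ) / (M : ℂ) := by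
      rw [div_eq_div_iff hN0 hM0]
      push_cast
      linear_combination (-2*(π:ℂ)*Complex.I*((x.val : ℕ):ℂ)) * hac
    rw [e1, hpow]
  have hmem : dft N f k ∈ K := by rw [hdft]; exact D.2
  refine ⟨hmem, fun σ hσ => ?_⟩
  have hval : (((u • k).val : ℤ) : ZMod N) = ((u * (k.val : ℤ) : ℤ) : ZMod N) := by
    push_cast
    rw [ZMod.natCast_val, ZMod.cast_id, ZMod.natCast_val, ZMod.cast_id, zsmul_eq_mul]
  obtain ⟨m, hm⟩ : (N : ℤ) ∣ ((u • k).val : ℤ) - u * (k.val : ℤ) := by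
    rw [← ZMod.intCast_zmod_eq_zero_iff_dvd]
    push_cast at hval ⊢
    rw [sub_eq_zero]
    exact_mod_cast hval
  have hmc : ((((u • k).val : ℕ)) : ℂ) = (u : ℂ) * ((k.val : ℕ) : ℂ) + (N : ℂ) * (m : ℂ) := by
    have h2 := congrArg (Int.cast : ℤ → ℂ) hm
    push_cast at h2 ⊢
    linear_combination h2
  have hsub : (⟨dft N f k, hmem⟩ : K) = D := Subtype.ext hdft
  have hσD : ((σ D : K) : ℂ) = ∑ x : ZMod N, (q x : ℂ) * (ζ ^ u) ^ (-(a * x.val : ℤ)) := by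
    rw [hcoe, hD, map_sum, map_sum]
    refine Finset.sum_congr rfl fun x _ => ?_
    rw [map_mul, map_mul, map_zpow₀, map_zpow₀, AlgEquiv.commutes, (rfl : K.val (algebraMap ℚ K (q x)) = algebraMap ℚ ℂ (q x))]
    rw [show K.val (σ ζK) = ζ ^ u from hσ]
    norm_num
  rw [hsub, hσD, dft]
  refine Finset.sum_congr rfl fun x _ => ?_
  rw [hq x]
  congr 1
  rw [← zpow_mul, ← hpow]
  apply Complex.exp_eq_exp_iff_exists_int.mpr
  refine ⟨-m * (x.val : ℤ), ?_⟩
  push_cast [ZMod.natCast_val, ZMod.intCast_cast] at hmc hac ⊢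
  rw [div_add' _ _ _ hM0, div_eq_div_iff hN0 hM0]
  linear_combination (-2*(π:ℂ)*Complex.I*(ZMod.cast x : ℂ)*(M:ℂ)) * hmc
    + (-2*(π:ℂ)*Complex.I*(ZMod.cast x : ℂ)*(u:ℂ)) * hac
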